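/- In the semigroup T = X⁺/ρ_R the following relations hold: for every w ∈ A⁺, e f̌(w) e = f̂(w); and for every z ∈ A⁺ \ L, e f̌(z) = f́(z) and f̌(z) e = f̀(z) (equalities meaning that the corresponding words over X are ρ_R-equivalent). -/

import Mathlib

open List

variable {A : Type*} {G : Type*} {A_G : Type*}

/-- `L̈`: the words not in `L` whose maximal proper prefix and suffix are in `L`. -/
def Ddot (L : Set (List A)) : Set (List A) :=
  {v | v ∉ L ∧ v.dropLast ∈ L ∧ v.tail ∈ L}

/-- `IsSc L w s` : `s` is the sequence of coordinates of `w` determined by `L`,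
via the recursive construction of the paper: if `w ∈ L` then `s = (w)`; otherwise
select an occurrence `w = w' v w''` of a factor `v ∈ L̈` and put
`s = sc_L[w' v_α] (v) sc_L[v_ω w'']`. -/
inductive IsSc (L : Set (List A)) : List A → List (List A) → Prop
  | base (w : List A) (hw : w ∈ L) : IsSc L w [w]
  | step (w' w'' v : List A) (s₁ s₂ : List (List A)) (hv : v ∈ Ddot L)
      (h₁ : IsSc L (w' ++ v.dropLast) s₁) (h₂ : IsSc L (v.tail ++ w'') s₂) :
      IsSc L (w' ++ v ++ w'') (s₁ ++ v :: s₂)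

open Classical in
/-- `sc_L[w]`, the sequence of coordinates of `w` determined by `L`. -/
noncomputable def scL (L : Set (List A)) (w : List A) : List (List A) :=
  if h : ∃ s, IsSc L w s then h.choose else []
section CoreG
variable [Group G]

/-- Evaluation of a word over `A_G` in the group `G`. -/
def evalW (evA : A_G → G) (u : List A_G) : G := (u.map evA).prod

/-- `f̂ : A* → G`. -/
noncomputable def fhat (L : Set (List A)) (f : List A → G) (w : List A) : G :=
  ((scL L w).map f).prod

/-- first coordinate (word part of `f̀`). -/
noncomputable def graveWord (L : Set (List A)) (w : List A) : List A :=
  (scL L w).headI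

/-- group part of `f̀`. -/
noncomputable def graveG (L : Set (List A)) (f : List A → G) (w : List A) : G :=
  ((scL L w).tail.map f).prod

/-- last coordinate (word part of `f́`). -/
noncomputable def acuteWord (L : Set (List A)) (w : List A) : List A :=
  (scL L w).getLastD []

/-- group part of `f́`. -/
noncomputable def acuteG (L : Set (List A)) (f : List A → G) (w : List A) : G :=
  ((scL L w).dropLast.map f).prod

/-- The word over `X = A ⊕ A_G` determined by a coordinate sequence:
`w₀ f(ẅ₁)f(w₁)⋯f(ẅ_m) w_m`, the middle group element written as its
chosen representative word over `A_G`. -/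
def checkOfSeq (f : List A → G) (rep : G → List A_G) :
    List (List A) → List (A ⊕ A_G)
  | [] => []
  | [w] => w.map Sum.inl
  | w :: rest =>
      w.map Sum.inl ++ (rep ((rest.dropLast.map f).prod)).map Sum.inr ++
        (rest.getLastD []).map Sum.inl

/-- longest prefix of `A`-letters. -/
def takeA : List (A ⊕ A_G) → List A
  | Sum.inl a :: r => a :: takeA r
  | _ => []

def dropA : List (A ⊕ A_G) → List (A ⊕ A_G)
  | Sum.inl _ :: r => dropA r
  | w => w

/-- longest prefix of `A_G`-letters. -/
def takeG : List (A ⊕ A_G) → List A_G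
  | Sum.inr b :: r => b :: takeG r
  | _ => []

def dropG : List (A ⊕ A_G) → List (A ⊕ A_G)
  | Sum.inr _ :: r => dropG r
  | w => w

/-- Processing of the part `g₁u₁g₂u₂⋯g_nu_n` of a mixed word: returns the group
element `eval(g₁)·f̂(u₁)·…·eval(g_n)·(acute part of u_n)` together with the final
word coordinate of `u_n`.  (Fuel-based recursion.) -/
noncomputable def midRunAux (L : Set (List A)) (f : List A → G) (evA : A_G → G) :
    ℕ → List (A ⊕ A_G) → G × List A
  | 0, _ => (1, [])
  | n + 1, w =>
      match dropA (dropG w) with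
      | [] => (evalW evA (takeG w) * acuteG L f (takeA (dropG w)),
               acuteWord L (takeA (dropG w)))
      | r' => (evalW evA (takeG w) * fhat L f (takeA (dropG w)) *
                 (midRunAux L f evA n r').1,
               (midRunAux L f evA n r').2)

/-- The extension `f̌ : X⁺ → Z ⊆ X⁺` of `f̌` to mixed words
(`f̌(u₀g₁u₁⋯g_nu_n) = f̀(u₀) g₁ f̂(u₁) ⋯ g_n f́(u_n)`, the middle group
element written as its representative word). -/
noncomputable def fcheckX (L : Set (List A)) (f : List A → G) (evA : A_G → G)
    (rep : G → List A_G) (w : List (A ⊕ A_G)) : List (A ⊕ A_G) :=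
  match dropA w with
  | [] => checkOfSeq f rep (scL L (takeA w))
  | r =>
      (graveWord L (takeA w)).map Sum.inl ++
        (rep (graveG L f (takeA w) * (midRunAux L f evA r.length r).1)).map Sum.inr ++
        (midRunAux L f evA r.length r).2.map Sum.inl

end CoreG
/-- The smallest (semigroup) congruence on words containing the relation `R`. -/
inductive Cong {X : Type*} (R : List X → List X → Prop) : List X → List X → Prop
  | of {u v : List X} : R u v → Cong R u v
  | refl (u : List X) : Cong R u u
  | symm {u v : List X} : Cong R u v → Cong R v u
  | trans {u v w : List X} : Cong R u v → Cong R v w → Cong R u w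
  | left (w : List X) {u v : List X} : Cong R u v → Cong R (w ++ u) (w ++ v)
  | right (w : List X) {u v : List X} : Cong R u v → Cong R (u ++ w) (v ++ w)

section CoreRel
variable [Group G]

/-- The relation `R = R_G ∪ R_f` over `X = A ⊕ A_G`, where
`R_f = {eue = f(u) : u ∈ L} ∪ {v̈ = v̈_α f(v̈) v̈_ω : v̈ ∈ L̈}`,
`e = rep 1` the chosen word representing `1_G`, group elements
read as their representative words. -/
inductive RelR (L : Set (List A)) (RG : List A_G → List A_G → Prop)
    (f : List A → G) (rep : G → List A_G) :
    List (A ⊕ A_G) → List (A ⊕ A_G) → Prop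
  | ofG {u v : List A_G} : RG u v → RelR L RG f rep (u.map Sum.inr) (v.map Sum.inr)
  | rU {u : List A} (hu : u ∈ L) :
      RelR L RG f rep
        ((rep 1).map Sum.inr ++ u.map Sum.inl ++ (rep 1).map Sum.inr)
        ((rep (f u)).map Sum.inr)
  | rV {v : List A} (hv : v ∈ Ddot L) :
      RelR L RG f rep (v.map Sum.inl)
        (v.dropLast.map Sum.inl ++ (rep (f v)).map Sum.inr ++ v.tail.map Sum.inl)

end CoreRel


section Aux
lemma isSc_ne_nil {L : Set (List A)} {w : List A} {s : List (List A)}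
    (h : IsSc L w s) : s ≠ [] := by
  induction h with
  | base w hw => simp
  | step w' w'' v s₁ s₂ hv h₁ h₂ ih₁ ih₂ => simp

lemma isSc_headI_mem {L : Set (List A)} {w : List A} {s : List (List A)}
    (h : IsSc L w s) : s.headI ∈ L := by
  induction h with
  | base w hw => simpa using hw
  | step w' w'' v s₁ s₂ hv h₁ h₂ ih₁ ih₂ =>
    cases s₁ with
    | nil => exact absurd rfl (isSc_ne_nil h₁)
    | cons a t => simpa using ih₁

lemma getLastD_append_cons {α : Type*} (l₁ : List α) (a : α) (l₂ : List α) (d : α) :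
    (l₁ ++ a :: l₂).getLastD d = l₂.getLastD a := by
  induction l₁ generalizing d with
  | nil => simp only [List.nil_append, List.getLastD_cons]
  | cons b t ih => rw [List.cons_append, List.getLastD_cons, ih]

lemma isSc_getLastD_mem {L : Set (List A)} {w : List A} {s : List (List A)}
    (h : IsSc L w s) : s.getLastD [] ∈ L := by
  induction h with
  | base w hw => simpa using hw
  | step w' w'' v s₁ s₂ hv h₁ h₂ ih₁ ih₂ =>
    rw [getLastD_append_cons]
    cases s₂ with
    | nil => exact absurd rfl (isSc_ne_nil h₂)
    | cons a t => rw [List.getLastD_cons] at ih₂ ⊢; exact ih₂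

lemma isSc_two_le {L : Set (List A)} {w : List A} {s : List (List A)}
    (h : IsSc L w s) (hw : w ∉ L) : 2 ≤ s.length := by
  cases h with
  | base w hw' => exact absurd hw' hw
  | step w' w'' v s₁ s₂ hv h₁ h₂ =>
    have := isSc_ne_nil h₁
    have : 1 ≤ s₁.length := List.length_pos_iff.mpr this
    simp only [List.length_append, List.length_cons]
    omega

lemma exists_ddot_factor {L : Set (List A)} (hE : [] ∉ L) (hA : ∀ a : A, [a] ∈ L) :
    ∀ n (v w : List A), v.length ≤ n → v <:+: w → v ≠ [] → v ∉ L →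
      ∃ u, u <:+: w ∧ u ∈ Ddot L := by
  intro n
  induction n with
  | zero =>
    intro v w hlen hvw hne _
    exact absurd (List.length_eq_zero_iff.mp (Nat.le_zero.mp hlen)) hne
  | succ n ih =>
    intro v w hlen hvw hne hvL
    have hv2 : 2 ≤ v.length := by
      rcases Nat.lt_or_ge v.length 2 with h | h
      · interval_cases hvl : v.length
        · exact absurd (List.length_eq_zero_iff.mp hvl) hne
        · obtain ⟨a, rfl⟩ := List.length_eq_one_iff.mp hvl
          exact absurd (hA a) hvL
      · exact h
    by_cases h1 : v.dropLast ∈ L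
    · by_cases h2 : v.tail ∈ L
      · exact ⟨v, hvw, hvL, h1, h2⟩
      · refine ih v.tail w ?_ ((v.tail_suffix.isInfix).trans hvw) ?_ h2
        · have := v.length_tail; omega
        · intro hnil
          have := v.length_tail; rw [hnil] at this; simp at this; omega
    · refine ih v.dropLast w ?_ ((v.dropLast_prefix.isInfix).trans hvw) ?_ h1
      · have := v.length_dropLast; omega
      · intro hnil
        have := v.length_dropLast; rw [hnil] at this; simp at this; omega

lemma exists_isSc {L : Set (List A)} (hE : [] ∉ L) (hA : ∀ a : A, [a] ∈ L) :
    ∀ n (w : List A), w.length ≤ n → w ≠ [] → ∃ s, IsSc L w s := by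
  intro n
  induction n with
  | zero =>
    intro w hlen hne
    exact absurd (List.length_eq_zero_iff.mp (Nat.le_zero.mp hlen)) hne
  | succ n ih =>
    intro w hlen hne
    by_cases hw : w ∈ L
    · exact ⟨[w], IsSc.base w hw⟩
    · obtain ⟨u, huw, hu⟩ :=
        exists_ddot_factor hE hA w.length w w le_rfl (List.infix_refl w) hne hw
      obtain ⟨w', w'', hsplit⟩ := huw
      have hudl : u.dropLast ≠ [] := fun h => hE (h ▸ hu.2.1)
      have hutl : u.tail ≠ [] := fun h => hE (h ▸ hu.2.2)
      have hul : 2 ≤ u.length := by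
        have h1 := u.length_dropLast
        have h2 : 0 < u.dropLast.length := List.length_pos_iff.mpr hudl
        omega
      have hwlen : w'.length + u.length + w''.length = w.length := by
        rw [← hsplit]; simp only [List.length_append]
      obtain ⟨s₁, hs₁⟩ := ih (w' ++ u.dropLast) (by
        simp only [List.length_append, List.length_dropLast]; omega)
        (by simp [hudl])
      obtain ⟨s₂, hs₂⟩ := ih (u.tail ++ w'') (by
        simp only [List.length_append, List.length_tail]; omega)
        (by simp [hutl])
      exact ⟨s₁ ++ u :: s₂, hsplit ▸ IsSc.step w' w'' u s₁ s₂ hu hs₁ hs₂⟩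

lemma scL_isSc {L : Set (List A)} (hE : [] ∉ L) (hA : ∀ a : A, [a] ∈ L)
    {w : List A} (hw : w ≠ []) : IsSc L w (scL L w) := by
  have hex : ∃ s, IsSc L w s := exists_isSc hE hA w.length w le_rfl hw
  rw [scL, dif_pos hex]
  exact hex.choose_spec

lemma prod_split {M : Type*} {α : Type*} [Monoid M] (f : α → M) (d : α) :
    ∀ (l : List α) (a : α),
      ((a :: l).map f).prod = ((a :: l).dropLast.map f).prod * f ((a :: l).getLastD d) := by
  intro l
  induction l with
  | nil => intro a; simp [List.getLastD_cons]
  | cons b t ih =>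
    intro a
    have h := ih b
    simp only [List.getLastD_cons, List.map_cons, List.prod_cons,
      show (a :: b :: t).dropLast = a :: (b :: t).dropLast from rfl] at h ⊢
    rw [h, mul_assoc]

lemma Cong.app {X : Type*} {R : List X → List X → Prop} {u₁ v₁ u₂ v₂ : List X}
    (h₁ : Cong R u₁ v₁) (h₂ : Cong R u₂ v₂) : Cong R (u₁ ++ u₂) (v₁ ++ v₂) :=
  (Cong.right u₂ h₁).trans (Cong.left v₁ h₂)

lemma cong_map_inr [Group G] {L : Set (List A)} {RG : List A_G → List A_G → Prop}
    {f : List A → G} {rep : G → List A_G} {u v : List A_G} (h : Cong RG u v) :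
    Cong (RelR L RG f rep) (u.map Sum.inr) (v.map Sum.inr) := by
  induction h with
  | of h => exact .of (.ofG h)
  | refl u => exact .refl _
  | symm _ ih => exact .symm ih
  | trans _ _ ih₁ ih₂ => exact .trans ih₁ ih₂
  | left w _ ih => rw [List.map_append, List.map_append]; exact .left _ ih
  | right w _ ih => rw [List.map_append, List.map_append]; exact .right _ ih

end Aux

/-- equation (4). In the semigroup `T = X⁺/ρ_R` the following
relations hold: for every `w ∈ A⁺`, `e f̌(w) e = f̂(w)`; and for every
`z ∈ A⁺ \ L`, `e f̌(z) = f́(z)` and `f̌(z) e = f̀(z)` (equalities meaning that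
the corresponding words over `X = A ⊕ A_G` are `ρ_R`-equivalent). -/
theorem relations_in_T [Nonempty A] [Group G]
    (L : Set (List A)) (hE : [] ∉ L)
    (hFac : ∀ u w : List A, w ∈ L → u ≠ [] → u <:+: w → u ∈ L)
    (hA : ∀ a : A, [a] ∈ L)
    (RG : List A_G → List A_G → Prop) (evA : A_G → G)
    (hRGne : ∀ u v : List A_G, RG u v → u ≠ [] ∧ v ≠ [])
    (hpres : ∀ u v : List A_G, u ≠ [] → v ≠ [] →
      (Cong RG u v ↔ evalW evA u = evalW evA v))
    (rep : G → List A_G) (hrepne : ∀ g : G, rep g ≠ [])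
    (hrep : ∀ g : G, evalW evA (rep g) = g)
    (f : List A → G) :
    (∀ w : List A, w ≠ [] →
      Cong (RelR L RG f rep)
        ((rep 1).map Sum.inr ++ checkOfSeq f rep (scL L w) ++ (rep 1).map Sum.inr)
        ((rep (fhat L f w)).map Sum.inr)) ∧
    (∀ z : List A, z ≠ [] → z ∉ L →
      Cong (RelR L RG f rep)
        ((rep 1).map Sum.inr ++ checkOfSeq f rep (scL L z))
        ((rep (acuteG L f z)).map Sum.inr ++ (acuteWord L z).map Sum.inl) ∧
      Cong (RelR L RG f rep)
        (checkOfSeq f rep (scL L z) ++ (rep 1).map Sum.inr)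
        ((graveWord L z).map Sum.inl ++ (rep (graveG L f z)).map Sum.inr)) := by
  classical
  have hscL : ∀ w : List A, w ≠ [] → IsSc L w (scL L w) := fun w hw => scL_isSc hE hA hw
  have evapp : ∀ u v : List A_G, evalW evA (u ++ v) = evalW evA u * evalW evA v := by
    intro u v; simp [evalW]
  have repC : ∀ u v : List A_G, u ≠ [] → v ≠ [] → evalW evA u = evalW evA v →
      Cong (RelR L RG f rep) (u.map Sum.inr) (v.map Sum.inr) :=
    fun u v hu hv h => cong_map_inr ((hpres u v hu hv).mpr h)
  have hmul : ∀ g₁ g₂ : G,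
      Cong (RelR L RG f rep) ((rep g₁).map Sum.inr ++ (rep g₂).map Sum.inr)
        ((rep (g₁ * g₂)).map Sum.inr) := by
    intro g₁ g₂
    rw [← List.map_append]
    exact repC _ _ (by simp [hrepne g₁]) (hrepne _) (by simp [evapp, hrep])
  have hins : ∀ g : G,
      Cong (RelR L RG f rep) ((rep g).map Sum.inr)
        ((rep 1).map Sum.inr ++ (rep g).map Sum.inr ++ (rep 1).map Sum.inr) := by
    intro g
    have h := repC (rep g) (rep 1 ++ rep g ++ rep 1) (hrepne g)
      (by simp [hrepne 1]) (by simp [evapp, hrep])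
    simpa using h
  have hinsl : ∀ g : G,
      Cong (RelR L RG f rep) ((rep g).map Sum.inr)
        ((rep 1).map Sum.inr ++ (rep g).map Sum.inr) := by
    intro g
    have h := repC (rep g) (rep 1 ++ rep g) (hrepne g)
      (by simp [hrepne 1]) (by simp [evapp, hrep])
    simpa using h
  have hinsr : ∀ g : G,
      Cong (RelR L RG f rep) ((rep g).map Sum.inr)
        ((rep g).map Sum.inr ++ (rep 1).map Sum.inr) := by
    intro g
    have h := repC (rep g) (rep g ++ rep 1) (hrepne g)
      (by simp [hrepne g]) (by simp [evapp, hrep])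
    simpa using h
  constructor
  · intro w hw
    have hs := hscL w hw
    simp only [fhat]
    obtain ⟨s, hsdef⟩ : ∃ s, scL L w = s := ⟨_, rfl⟩
    rw [hsdef] at hs ⊢
    rcases s with _ | ⟨w₀, _ | ⟨x, r⟩⟩
    · exact absurd rfl (isSc_ne_nil hs)
    · have hw₀ : w₀ ∈ L := by simpa using isSc_headI_mem hs
      simpa [checkOfSeq] using Cong.of (RelR.rU (L := L) (RG := RG) (f := f) (rep := rep) hw₀)
    · have hw₀ : w₀ ∈ L := by simpa using isSc_headI_mem hs
      have hwm : (x :: r).getLastD [] ∈ L := by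
        simpa [List.getLastD_cons] using isSc_getLastD_mem hs
      set g : G := ((x :: r).dropLast.map f).prod with hg
      set wm : List A := (x :: r).getLastD [] with hwmdef
      have hcheck : checkOfSeq f rep (w₀ :: x :: r) =
          w₀.map Sum.inl ++ (rep g).map Sum.inr ++ wm.map Sum.inl := rfl
      have hprod : ((x :: r).map f).prod = g * f wm := prod_split f [] r x
      have hfhat : (((w₀ :: x :: r)).map f).prod = f w₀ * g * f wm := by
        rw [List.map_cons, List.prod_cons, hprod, mul_assoc]
      rw [hcheck, hfhat]
      have c1 : Cong (RelR L RG f rep)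
          ((rep 1).map Sum.inr ++ (w₀.map Sum.inl ++ (rep g).map Sum.inr ++ wm.map Sum.inl)
            ++ (rep 1).map Sum.inr)
          (((rep 1).map Sum.inr ++ w₀.map Sum.inl ++ (rep 1).map Sum.inr) ++ (rep g).map Sum.inr
            ++ ((rep 1).map Sum.inr ++ wm.map Sum.inl ++ (rep 1).map Sum.inr)) := by
        have h := Cong.app (Cong.app (Cong.refl ((rep (1 : G)).map Sum.inr ++ w₀.map Sum.inl)) (hins g))
            (Cong.refl (wm.map Sum.inl ++ (rep (1 : G)).map Sum.inr))
        convert h using 1 <;> simp [List.append_assoc]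
      have c2 : Cong (RelR L RG f rep)
          (((rep 1).map Sum.inr ++ w₀.map Sum.inl ++ (rep 1).map Sum.inr) ++ (rep g).map Sum.inr
            ++ ((rep 1).map Sum.inr ++ wm.map Sum.inl ++ (rep 1).map Sum.inr))
          ((rep (f w₀)).map Sum.inr ++ (rep g).map Sum.inr ++ (rep (f wm)).map Sum.inr) :=
        Cong.app (Cong.app (Cong.of (RelR.rU hw₀)) (Cong.refl _)) (Cong.of (RelR.rU hwm))
      have c3 : Cong (RelR L RG f rep)
          ((rep (f w₀)).map Sum.inr ++ (rep g).map Sum.inr ++ (rep (f wm)).map Sum.inr)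
          ((rep (f w₀ * g * f wm)).map Sum.inr) :=
        (Cong.app (hmul (f w₀) g) (Cong.refl _)).trans (hmul (f w₀ * g) (f wm))
      exact (c1.trans (c2.trans c3))
  · intro z hz hzL
    have hs := hscL z hz
    simp only [acuteG, acuteWord, graveG, graveWord]
    obtain ⟨s, hsdef⟩ : ∃ s, scL L z = s := ⟨_, rfl⟩
    rw [hsdef] at hs ⊢
    have h2 := isSc_two_le hs hzL
    rcases s with _ | ⟨w₀, _ | ⟨x, r⟩⟩
    · simp at h2
    · simp at h2
    · have hw₀ : w₀ ∈ L := by simpa using isSc_headI_mem hs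
      have hwm : (x :: r).getLastD [] ∈ L := by
        simpa [List.getLastD_cons] using isSc_getLastD_mem hs
      set g : G := ((x :: r).dropLast.map f).prod with hg
      set wm : List A := (x :: r).getLastD [] with hwmdef
      have hcheck : checkOfSeq f rep (w₀ :: x :: r) =
          w₀.map Sum.inl ++ (rep g).map Sum.inr ++ wm.map Sum.inl := rfl
      have hprod : ((x :: r).map f).prod = g * f wm := prod_split f [] r x
      have hacG : ((w₀ :: x :: r).dropLast.map f).prod = f w₀ * g := by
        rw [show (w₀ :: x :: r).dropLast = w₀ :: (x :: r).dropLast from rfl,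
          List.map_cons, List.prod_cons]
      have hacW : (w₀ :: x :: r).getLastD [] = wm := by
        rw [hwmdef]; simp only [List.getLastD_cons]
      have hgrW : (w₀ :: x :: r).headI = w₀ := rfl
      have hgrG : ((w₀ :: x :: r).tail.map f).prod = g * f wm := hprod
      rw [hcheck, hacG, hacW, hgrW, hgrG]
      constructor
      · have c1 : Cong (RelR L RG f rep)
            ((rep 1).map Sum.inr ++ (w₀.map Sum.inl ++ (rep g).map Sum.inr ++ wm.map Sum.inl))
            (((rep 1).map Sum.inr ++ w₀.map Sum.inl ++ (rep 1).map Sum.inr)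
              ++ (rep g).map Sum.inr ++ wm.map Sum.inl) := by
          have h := Cong.app (Cong.app (Cong.refl ((rep (1 : G)).map Sum.inr ++ w₀.map Sum.inl))
              (hinsl g)) (Cong.refl (wm.map Sum.inl))
          convert h using 1 <;> simp [List.append_assoc]
        have c2 : Cong (RelR L RG f rep)
            (((rep 1).map Sum.inr ++ w₀.map Sum.inl ++ (rep 1).map Sum.inr)
              ++ (rep g).map Sum.inr ++ wm.map Sum.inl)
            ((rep (f w₀)).map Sum.inr ++ (rep g).map Sum.inr ++ wm.map Sum.inl) :=
          Cong.app (Cong.app (Cong.of (RelR.rU hw₀)) (Cong.refl _)) (Cong.refl _)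
        have c3 : Cong (RelR L RG f rep)
            ((rep (f w₀)).map Sum.inr ++ (rep g).map Sum.inr ++ wm.map Sum.inl)
            ((rep (f w₀ * g)).map Sum.inr ++ wm.map Sum.inl) :=
          Cong.app (hmul (f w₀) g) (Cong.refl _)
        exact c1.trans (c2.trans c3)
      · have c1 : Cong (RelR L RG f rep)
            ((w₀.map Sum.inl ++ (rep g).map Sum.inr ++ wm.map Sum.inl) ++ (rep 1).map Sum.inr)
            (w₀.map Sum.inl ++ (rep g).map Sum.inr
              ++ ((rep 1).map Sum.inr ++ wm.map Sum.inl ++ (rep 1).map Sum.inr)) := by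
          have h := Cong.app (Cong.app (Cong.refl (w₀.map (Sum.inl : A → A ⊕ A_G))) (hinsr g))
              (Cong.refl (wm.map Sum.inl ++ (rep (1 : G)).map Sum.inr))
          convert h using 1 <;> simp [List.append_assoc]
        have c2 : Cong (RelR L RG f rep)
            (w₀.map Sum.inl ++ (rep g).map Sum.inr
              ++ ((rep 1).map Sum.inr ++ wm.map Sum.inl ++ (rep 1).map Sum.inr))
            (w₀.map Sum.inl ++ (rep g).map Sum.inr ++ (rep (f wm)).map Sum.inr) :=
          Cong.app (Cong.refl _) (Cong.of (RelR.rU hwm))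
        have c3 : Cong (RelR L RG f rep)
            (w₀.map Sum.inl ++ (rep g).map Sum.inr ++ (rep (f wm)).map Sum.inr)
            (w₀.map Sum.inl ++ (rep (g * f wm)).map Sum.inr) := by
          have h := Cong.app (Cong.refl (w₀.map (Sum.inl : A → A ⊕ A_G))) (hmul g (f wm))
          convert h using 1 <;> simp [List.append_assoc]
        exact c1.trans (c2.trans c3)
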